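/- For any model M of the theory of substitutions 𝕊, the data F(M) — with objects of level n the elements of M_{(ctx,n)}, morphisms given by tuples of terms satisfying the Hom predicate, composition defined by substitution, identities given by tuples of variables, ft and the projections p_A as given, pullback types A[f] = subst_{ty}(B, A, f), and connecting morphisms q(f, A) — forms a contextual category; in particular the canonical square with vertices A[f], A, B, ft_k(A) is Cartesian. -/

import Mathlib

universe u

/-- Iterated `ft`, lowering a context of length `k` to one of length `m ≤ k`. -/
def ftLe' {Ctx : ℕ → Type u} (ft : ∀ n, Ctx (n + 1) → Ctx n) :
    ∀ {k m : ℕ}, m ≤ k → Ctx k → Ctx m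
  | 0, 0, _, A => A
  | k + 1, m, h, A =>
    if hm : m = k + 1 then cast (congrArg Ctx hm.symm) A
    else ftLe' ft (by omega) (ft k A)

/-- A model of the partial Horn theory of substitutions `𝕊`: sorts `(ctx, n)` and `(tm, n)`
(with `(ty, n) := (ctx, n+1)`), operations `*`, `ft`, `ty`, variables `v_{n,i}` and full
substitution `subst_{p,n,k}` (a partial operation, represented using `Part`), subject to the
axioms of `𝕊`. -/
structure SubModel : Type (u + 1) where
  Ctx : ℕ → Type u
  Tm : ℕ → Type u
  star : Ctx 0
  ctx_zero_unique : ∀ A : Ctx 0, A = star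
  ft : ∀ n, Ctx (n + 1) → Ctx n
  ty : ∀ n, Tm n → Ctx (n + 1)
  v : ∀ n i, i < n → Ctx n → Tm n
  substTy : ∀ n k, Ctx n → Ctx (k + 1) → (Fin k → Tm n) → Part (Ctx (n + 1))
  substTm : ∀ n k, Ctx n → Tm k → (Fin k → Tm n) → Part (Tm n)
  -- the axioms are stated below, after the auxiliary definitions
  ax_def_substTy : ∀ n k (B : Ctx n) (A : Ctx (k + 1)) (a : Fin k → Tm n),
    (substTy n k B A a).Dom ↔
      ∀ i : Fin k, ty n (a i) ∈ substTy n i B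
        (ftLe' ft (Nat.succ_le_of_lt i.isLt) (ft k A))
        (fun j => a (Fin.castLE (le_of_lt i.isLt) j))
  ax_def_substTm : ∀ n k (B : Ctx n) (b : Tm k) (a : Fin k → Tm n),
    (substTm n k B b a).Dom ↔
      ∀ i : Fin k, ty n (a i) ∈ substTy n i B
        (ftLe' ft (Nat.succ_le_of_lt i.isLt) (ft k (ty k b)))
        (fun j => a (Fin.castLE (le_of_lt i.isLt) j))
  ax_type_var : ∀ n i (h : i < n) (A : Ctx n),
    ty n (v n i h A) ∈ substTy n (n - i - 1) A
      (ftLe' ft (by omega) A)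
      (fun j => v n (n - 1 - j) (by omega) A)
  ax_type_substTy : ∀ n k B A a C, C ∈ substTy n k B A a → ft n C = B
  ax_type_substTm : ∀ n k (B : Ctx n) (b : Tm k) (a : Fin k → Tm n),
    (substTm n k B b a).map (ty n) = substTy n k B (ty k b) a
  ax_subst_var_ty : ∀ n (A : Ctx (n + 1)),
    substTy n n (ft n A) A (fun j => v n (n - 1 - j) (by omega) (ft n A)) = Part.some A
  ax_subst_var_tm : ∀ n (b : Tm n),
    substTm n n (ft n (ty n b)) b
      (fun j => v n (n - 1 - j) (by omega) (ft n (ty n b))) = Part.some b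
  ax_var_subst : ∀ n k (B : Ctx n) (A : Ctx k) (a : Fin k → Tm n)
    (_ : ∀ i : Fin k, ty n (a i) ∈ substTy n i B
        (ftLe' ft (Nat.succ_le_of_lt i.isLt) A)
        (fun j => a (Fin.castLE (le_of_lt i.isLt) j)))
    (i : ℕ) (h : i < k),
    substTm n k B (v k i h A) a = Part.some (a ⟨k - i - 1, by omega⟩)
  ax_subst_subst_tm : ∀ n k m (C : Ctx n) (B : Ctx k) (b : Fin k → Tm n)
    (a : Fin m → Tm k) (t : Tm m)
    (_ : ∀ i : Fin k, ty n (b i) ∈ substTy n i C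
        (ftLe' ft (Nat.succ_le_of_lt i.isLt) B)
        (fun j => b (Fin.castLE (le_of_lt i.isLt) j)))
    (_ : ∀ i : Fin m, ty k (a i) ∈ substTy k i B
        (ftLe' ft (Nat.succ_le_of_lt i.isLt) (ft m (ty m t)))
        (fun j => a (Fin.castLE (le_of_lt i.isLt) j)))
    (s : Tm k) (_ : s ∈ substTm k m B t a)
    (c : Fin m → Tm n) (_ : ∀ i, c i ∈ substTm n k C (a i) b),
    substTm n k C s b = substTm n m C t c
  ax_subst_subst_ty : ∀ n k m (C : Ctx n) (B : Ctx k) (b : Fin k → Tm n)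
    (a : Fin m → Tm k) (A : Ctx (m + 1))
    (_ : ∀ i : Fin k, ty n (b i) ∈ substTy n i C
        (ftLe' ft (Nat.succ_le_of_lt i.isLt) B)
        (fun j => b (Fin.castLE (le_of_lt i.isLt) j)))
    (_ : ∀ i : Fin m, ty k (a i) ∈ substTy k i B
        (ftLe' ft (Nat.succ_le_of_lt i.isLt) (ft m A))
        (fun j => a (Fin.castLE (le_of_lt i.isLt) j)))
    (A' : Ctx (k + 1)) (_ : A' ∈ substTy k m B A a)
    (c : Fin m → Tm n) (_ : ∀ i, c i ∈ substTm n k C (a i) b),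
    substTy n k C A' b = substTy n m C A c


namespace SubModel

variable (M : SubModel.{u})

/-- The `Hom` predicate of `𝕊`: the tuple `(a_1, …, a_k)` is a morphism `B → A` of the
associated category, i.e. each `a_i` has the type obtained by substituting `a_1, …, a_{i-1}`
into the `i`-th component of `A`. -/
def Hom (n k : ℕ) (B : M.Ctx n) (A : M.Ctx k) (a : Fin k → M.Tm n) : Prop :=
  ∀ i : Fin k, M.ty n (a i) ∈ M.substTy n i B
    (ftLe' M.ft (Nat.succ_le_of_lt i.isLt) A)
    (fun j => a (Fin.castLE (le_of_lt i.isLt) j))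

/-- The identity morphism `id_A = (v_{n,n-1}(A), …, v_{n,0}(A))`. -/
def idTuple {n : ℕ} (A : M.Ctx n) : Fin n → M.Tm n :=
  fun j => M.v n (n - 1 - j) (by omega) A

/-- The projection `p_A = (v_{n+1,n}(A), …, v_{n+1,1}(A)) : A → ft(A)`. -/
def pTuple {n : ℕ} (A : M.Ctx (n + 1)) : Fin n → M.Tm (n + 1) :=
  fun j => M.v (n + 1) (n - j) (by omega) A

/-- `f : ft(A) → A` is a section of the projection `p_A`: it is a morphism and
`p_A ∘ f = id_{ft(A)}` (composition is componentwise substitution). -/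
def IsSection {k : ℕ} (A : M.Ctx (k + 1)) (f : Fin (k + 1) → M.Tm k) : Prop :=
  M.Hom k (k + 1) (M.ft k A) A f ∧
  ∀ j : Fin k, M.substTm k (k + 1) (M.ft k A) (M.pTuple A j) f =
    Part.some (M.idTuple (M.ft k A) j)

/-- The map `φ(a) = (v_{k,k-1}(ft A), …, v_{k,0}(ft A), a)`. -/
def phi {k : ℕ} (A : M.Ctx (k + 1)) (a : M.Tm k) : Fin (k + 1) → M.Tm k :=
  fun j => if h : (j : ℕ) < k then M.v k (k - 1 - j) (by omega) (M.ft k A) else a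

end SubModel




/-- A contextual category: a graded category with a terminal object of level `0`, maps
`ft`, projections `p_A`, and a strictly functorial choice of pullbacks `f*(A) = pb A B f`
with connecting maps `q(f, A)` along the projections. -/
structure CtxCat : Type (u + 1) where
  Ob : ℕ → Type u
  Hom : (Σ n, Ob n) → (Σ n, Ob n) → Type u
  id : ∀ X, Hom X X
  comp : ∀ {X Y Z}, Hom X Y → Hom Y Z → Hom X Z
  id_comp : ∀ {X Y} (f : Hom X Y), comp (id X) f = f
  comp_id : ∀ {X Y} (f : Hom X Y), comp f (id Y) = f
  assoc : ∀ {W X Y Z} (f : Hom W X) (g : Hom X Y) (h : Hom Y Z),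
    comp (comp f g) h = comp f (comp g h)
  pt : Ob 0
  pt_unique : ∀ A : Ob 0, A = pt
  toPt : ∀ X, Hom X ⟨0, pt⟩
  toPt_unique : ∀ X (f : Hom X ⟨0, pt⟩), f = toPt X
  ft : ∀ {n}, Ob (n + 1) → Ob n
  p : ∀ {n} (A : Ob (n + 1)), Hom ⟨n + 1, A⟩ ⟨n, ft A⟩
  pb : ∀ {n k} (A : Ob (n + 1)) (B : Ob k), Hom ⟨k, B⟩ ⟨n, ft A⟩ → Ob (k + 1)
  pb_ft : ∀ {n k} (A : Ob (n + 1)) (B : Ob k) (f : Hom ⟨k, B⟩ ⟨n, ft A⟩),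
    ft (pb A B f) = B
  q : ∀ {n k} (A : Ob (n + 1)) (B : Ob k) (f : Hom ⟨k, B⟩ ⟨n, ft A⟩),
    Hom ⟨k + 1, pb A B f⟩ ⟨n + 1, A⟩
  square : ∀ {n k} (A : Ob (n + 1)) (B : Ob k) (f : Hom ⟨k, B⟩ ⟨n, ft A⟩),
    comp (q A B f) (p A) =
      comp (cast (by rw [pb_ft A B f]) (p (pb A B f)) :
        Hom ⟨k + 1, pb A B f⟩ ⟨k, B⟩) f
  cartesian : ∀ {n k} (A : Ob (n + 1)) (B : Ob k) (f : Hom ⟨k, B⟩ ⟨n, ft A⟩)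
    {X : Σ n, Ob n} (g : Hom X ⟨n + 1, A⟩) (h : Hom X ⟨k, B⟩),
    comp g (p A) = comp h f →
    ∃! u : Hom X ⟨k + 1, pb A B f⟩, comp u (q A B f) = g ∧
      comp u (cast (by rw [pb_ft A B f]) (p (pb A B f)) :
        Hom ⟨k + 1, pb A B f⟩ ⟨k, B⟩) = h
  pb_id : ∀ {n} (A : Ob (n + 1)), pb A (ft A) (id ⟨n, ft A⟩) = A
  q_id : ∀ {n} (A : Ob (n + 1)), HEq (q A (ft A) (id ⟨n, ft A⟩)) (id ⟨n + 1, A⟩)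
  pb_comp : ∀ {n k m} (A : Ob (n + 1)) (B : Ob k) (f : Hom ⟨k, B⟩ ⟨n, ft A⟩)
    (C : Ob m) (g : Hom ⟨m, C⟩ ⟨k, B⟩),
    pb A C (comp g f) =
      pb (pb A B f) C (cast (by rw [pb_ft A B f]) g :
        Hom ⟨m, C⟩ ⟨k, ft (pb A B f)⟩)
  q_comp : ∀ {n k m} (A : Ob (n + 1)) (B : Ob k) (f : Hom ⟨k, B⟩ ⟨n, ft A⟩)
    (C : Ob m) (g : Hom ⟨m, C⟩ ⟨k, B⟩),
    HEq (q A C (comp g f))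
      (comp (q (pb A B f) C (cast (by rw [pb_ft A B f]) g)) (q A B f))

/-- A correspondence between a model `M` of the theory of substitutions `𝕊` and a
contextual category `C`, exhibiting `C` as the contextual category `F(M)` associated to `M`:
objects of level `n` are the contexts of length `n`, morphisms are the compatible tuples of
terms, composition is componentwise substitution, identities are the tuples of variables,
`ft` and the projections are as given, pullbacks `A[f]` are given by `subst_ty`, and the
connecting maps `q(f, A)` are given by weakened tuples together with the top variable. -/
structure SubCtxCorrespondence (M : SubModel.{u}) (C : CtxCat.{u}) where
  obEquiv : ∀ n, M.Ctx n ≃ C.Ob n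
  ft_compat : ∀ n (A : M.Ctx (n + 1)),
    C.ft (obEquiv (n + 1) A) = obEquiv n (M.ft n A)
  homEquiv : ∀ n k (B : M.Ctx n) (A : M.Ctx k),
    { a : Fin k → M.Tm n // M.Hom n k B A a } ≃
      C.Hom ⟨n, obEquiv n B⟩ ⟨k, obEquiv k A⟩
  id_compat : ∀ n (A : M.Ctx n) (h : M.Hom n n A A (M.idTuple A)),
    homEquiv n n A A ⟨M.idTuple A, h⟩ = C.id ⟨n, obEquiv n A⟩
  comp_compat : ∀ {n k m} (B : M.Ctx n) (A : M.Ctx k) (A' : M.Ctx m)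
    (f : { a // M.Hom n k B A a }) (g : { c // M.Hom k m A A' c })
    (h : { c // M.Hom n m B A' c }),
    (∀ i, h.1 i ∈ M.substTm n k B (g.1 i) f.1) →
    C.comp (homEquiv n k B A f) (homEquiv k m A A' g) = homEquiv n m B A' h
  p_compat : ∀ n (A : M.Ctx (n + 1)) (h : M.Hom (n + 1) n A (M.ft n A) (M.pTuple A)),
    homEquiv (n + 1) n A (M.ft n A) ⟨M.pTuple A, h⟩ =
      cast (by rw [ft_compat n A]) (C.p (obEquiv (n + 1) A))
  pb_compat : ∀ n k (B : M.Ctx n) (A : M.Ctx (k + 1)) (a : Fin k → M.Tm n)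
    (h : M.Hom n k B (M.ft k A) a) (T : M.Ctx (n + 1)) (_ : T ∈ M.substTy n k B A a),
    obEquiv (n + 1) T =
      C.pb (obEquiv (k + 1) A) (obEquiv n B)
        (cast (by rw [ft_compat k A]) (homEquiv n k B (M.ft k A) ⟨a, h⟩))
  q_compat : ∀ n k (B : M.Ctx n) (A : M.Ctx (k + 1)) (a : Fin k → M.Tm n)
    (h : M.Hom n k B (M.ft k A) a) (T : M.Ctx (n + 1)) (hT : T ∈ M.substTy n k B A a)
    (qf : Fin (k + 1) → M.Tm (n + 1)) (hq : M.Hom (n + 1) (k + 1) T A qf),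
    (∀ i : Fin k, qf i.castSucc ∈ M.substTm (n + 1) n T (a i) (M.pTuple T)) →
    qf (Fin.last k) = M.v (n + 1) 0 (by omega) T →
    homEquiv (n + 1) (k + 1) T A ⟨qf, hq⟩ =
      cast (by rw [pb_compat n k B A a h T hT])
        (C.q (obEquiv (k + 1) A) (obEquiv n B)
          (cast (by try rw [ft_compat k A]) (homEquiv n k B (M.ft k A) ⟨a, h⟩)))

section FtLe
variable {Ctx : ℕ → Type u} (ft : ∀ n, Ctx (n + 1) → Ctx n)

lemma ftLe'_self : ∀ {k : ℕ} (h : k ≤ k) (A : Ctx k), ftLe' ft h A = A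
  | 0, _, _ => rfl
  | _ + 1, _, _ => by simp [ftLe']

lemma ftLe'_step {k m : ℕ} (h : m ≤ k) (h' : m ≤ k + 1) (A : Ctx (k + 1)) :
    ftLe' ft h' A = ftLe' ft h (ft k A) := by
  have hm : ¬ (m = k + 1) := by omega
  simp [ftLe', hm]

lemma ft_ftLe' : ∀ {k m : ℕ} (h : m + 1 ≤ k) (h' : m ≤ k) (A : Ctx k),
    ft m (ftLe' ft h A) = ftLe' ft h' A := by
  intro k
  induction k with
  | zero => intro m h; omega
  | succ k ih =>
    intro m h h' A
    by_cases hm : m + 1 = k + 1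
    · have : m = k := by omega
      subst this
      rw [ftLe'_self, ftLe'_step ft le_rfl h' A, ftLe'_self]
    · rw [ftLe'_step ft (by omega : m + 1 ≤ k) h A,
        ftLe'_step ft (by omega : m ≤ k) h' A, ih _ _]

lemma ftLe'_ftLe' : ∀ {k m l : ℕ} (h1 : l ≤ m) (h2 : m ≤ k) (h3 : l ≤ k) (A : Ctx k),
    ftLe' ft h1 (ftLe' ft h2 A) = ftLe' ft h3 A := by
  intro k
  induction k with
  | zero =>
    intro m l h1 h2 h3 A
    have hm : m = 0 := by omega
    subst hm
    have hl : l = 0 := by omega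
    subst hl
    rw [ftLe'_self, ftLe'_self]
  | succ k ih =>
    intro m l h1 h2 h3 A
    by_cases hm : m = k + 1
    · subst hm
      rw [ftLe'_self]
    · rw [ftLe'_step ft (by omega : m ≤ k) h2 A,
        ftLe'_step ft (by omega : l ≤ k) h3 A, ih h1 _ _]

lemma ftLe'_heq {k m m' : ℕ} (e : m = m') (h : m ≤ k) (h' : m' ≤ k) (A : Ctx k) :
    HEq (ftLe' ft h A) (ftLe' ft h' A) := by subst e; rfl

end FtLe

namespace SubProof
variable {M : SubModel.{u}}

lemma substTy_cast (M : SubModel.{u}) {n k k' : ℕ} (e : k = k') (B : M.Ctx n)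
    (A : M.Ctx (k + 1)) (A' : M.Ctx (k' + 1)) (hA : HEq A A')
    (a : Fin k → M.Tm n) (a' : Fin k' → M.Tm n)
    (ha : ∀ j : Fin k, a j = a' (Fin.cast e j)) :
    M.substTy n k B A a = M.substTy n k' B A' a' := by
  subst e
  have : A = A' := eq_of_heq hA
  subst this
  have : a = a' := funext fun j => ha j
  rw [this]

lemma ft_ty {n k : ℕ} {B : M.Ctx n} {A : M.Ctx k} {a : Fin k → M.Tm n}
    (h : M.Hom n k B A a) (i : Fin k) : M.ft n (M.ty n (a i)) = B :=
  M.ax_type_substTy _ _ _ _ _ _ (h i)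

lemma hom_restrict {n k : ℕ} {B : M.Ctx n} {A : M.Ctx k} {a : Fin k → M.Tm n}
    (h : M.Hom n k B A a) (m : ℕ) (hm : m ≤ k) :
    M.Hom n m B (ftLe' M.ft hm A) (fun j => a (Fin.castLE hm j)) := by
  intro i
  have h1 := h (Fin.castLE hm i)
  have e : ((Fin.castLE hm i : Fin k) : ℕ) = (i : ℕ) := rfl
  have := substTy_cast M (k := (Fin.castLE hm i : Fin k)) (k' := (i : ℕ)) rfl B
    (ftLe' M.ft (Nat.succ_le_of_lt (Fin.castLE hm i).isLt) A)
    (ftLe' M.ft (Nat.succ_le_of_lt i.isLt) (ftLe' M.ft hm A))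
    (heq_of_eq (by rw [ftLe'_ftLe']))
    (fun j => a (Fin.castLE (le_of_lt (Fin.castLE hm i).isLt) j))
    (fun j => a (Fin.castLE hm (Fin.castLE (le_of_lt i.isLt) j)))
    (fun j => rfl)
  rw [this] at h1
  exact h1
end SubProof

namespace SubProof
variable {M : SubModel.{u}}

lemma id_hom (A : M.Ctx n) : M.Hom n n A A (M.idTuple A) := by
  intro i
  have h1 := M.ax_type_var n (n - 1 - i) (by omega) A
  have e : n - (n - 1 - (i : ℕ)) - 1 = (i : ℕ) := by omega
  have h2 := substTy_cast M e A
    (ftLe' M.ft (by omega) A) (ftLe' M.ft (Nat.succ_le_of_lt i.isLt) A)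
    (ftLe'_heq M.ft (by omega : n - (n - 1 - (i:ℕ)) - 1 + 1 = (i:ℕ) + 1) _ _ A)
    (fun j => M.v n (n - 1 - j) (by omega) A)
    (fun j => M.idTuple A (Fin.castLE (le_of_lt i.isLt) j))
    (fun j => rfl)
  rw [h2] at h1
  exact h1

lemma p_hom (A : M.Ctx (n + 1)) : M.Hom (n + 1) n A (M.ft n A) (M.pTuple A) := by
  intro i
  have h1 := M.ax_type_var (n + 1) (n - i) (by omega) A
  have e : n + 1 - (n - (i : ℕ)) - 1 = (i : ℕ) := by omega
  have h2 := substTy_cast M e A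
    (ftLe' M.ft (by omega) A) (ftLe' M.ft (Nat.succ_le_of_lt i.isLt) (M.ft n A))
    (HEq.trans (ftLe'_heq M.ft (by omega : n + 1 - (n - (i:ℕ)) - 1 + 1 = (i:ℕ) + 1) _
        (by omega : (i:ℕ) + 1 ≤ n + 1) A)
      (heq_of_eq (ftLe'_step M.ft (Nat.succ_le_of_lt i.isLt) _ A)))
    (fun j => M.v (n + 1) (n + 1 - 1 - j) (by omega) A)
    (fun j => M.pTuple A (Fin.castLE (le_of_lt i.isLt) j))
    (fun j => rfl)
  rw [h2] at h1
  exact h1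

end SubProof

namespace SubProof
variable {M : SubModel.{u}}

/-- Morphisms of the category associated to `M`. -/
def Mor (M : SubModel.{u}) (n k : ℕ) (B : M.Ctx n) (A : M.Ctx k) : Type u :=
  { a : Fin k → M.Tm n // M.Hom n k B A a }

lemma comp_dom {n k m : ℕ} {B : M.Ctx n} {A : M.Ctx k} {A' : M.Ctx m}
    (f : Mor M n k B A) (g : Mor M k m A A') (i : Fin m) :
    (M.substTm n k B (g.1 i) f.1).Dom := by
  rw [M.ax_def_substTm]
  intro j
  rw [ft_ty g.2 i]
  exact f.2 j

/-- Composition: componentwise substitution. -/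
def compT {n k m : ℕ} {B : M.Ctx n} {A : M.Ctx k} {A' : M.Ctx m}
    (f : Mor M n k B A) (g : Mor M k m A A') : Fin m → M.Tm n :=
  fun i => (M.substTm n k B (g.1 i) f.1).get (comp_dom f g i)

lemma compT_mem {n k m : ℕ} {B : M.Ctx n} {A : M.Ctx k} {A' : M.Ctx m}
    (f : Mor M n k B A) (g : Mor M k m A A') (i : Fin m) :
    compT f g i ∈ M.substTm n k B (g.1 i) f.1 :=
  Part.get_mem _

lemma comp_hom {n k m : ℕ} {B : M.Ctx n} {A : M.Ctx k} {A' : M.Ctx m}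
    (f : Mor M n k B A) (g : Mor M k m A A') :
    M.Hom n m B A' (compT f g) := by
  intro i
  have h1 : M.ty n (compT f g i) ∈ M.substTy n k B (M.ty k (g.1 i)) f.1 := by
    rw [← M.ax_type_substTm]
    exact Part.mem_map _ (compT_mem f g i)
  have h2 := M.ax_subst_subst_ty n k i B A f.1
    (fun j => g.1 (Fin.castLE (le_of_lt i.isLt) j))
    (ftLe' M.ft (Nat.succ_le_of_lt i.isLt) A')
    f.2
    (by
      intro j
      have := hom_restrict g.2 i (le_of_lt i.isLt) j
      rw [ft_ftLe' M.ft _ (le_of_lt i.isLt) A']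
      exact this)
    (M.ty k (g.1 i)) (g.2 i)
    (fun j => compT f g (Fin.castLE (le_of_lt i.isLt) j))
    (fun j => compT_mem f g _)
  rw [h2] at h1
  exact h1

end SubProof

namespace SubProof
variable {M : SubModel.{u}}

lemma subst_id_tm {n : ℕ} (B : M.Ctx n) (b : M.Tm n) (hb : M.ft n (M.ty n b) = B) :
    M.substTm n n B b (M.idTuple B) = Part.some b := by
  subst hb
  exact M.ax_subst_var_tm n b

/-- identity as a `Mor` -/
def idM (A : M.Ctx n) : Mor M n n A A := ⟨M.idTuple A, id_hom A⟩

lemma id_comp' {n k : ℕ} {B : M.Ctx n} {A : M.Ctx k} (f : Mor M n k B A) :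
    compT (idM B) f = f.1 := by
  funext i
  exact Part.mem_unique (compT_mem (idM B) f i)
    (by show f.1 i ∈ M.substTm n n B (f.1 i) (M.idTuple B)
        rw [subst_id_tm B (f.1 i) (ft_ty f.2 i)]; exact Part.mem_some _)

lemma comp_id' {n k : ℕ} {B : M.Ctx n} {A : M.Ctx k} (f : Mor M n k B A) :
    compT f (idM A) = f.1 := by
  funext i
  have key : M.substTm n k B (M.idTuple A i) f.1
      = Part.some (f.1 ⟨k - (k - 1 - (i : ℕ)) - 1, by omega⟩) :=
    M.ax_var_subst n k B A f.1 f.2 (k - 1 - i) (by omega)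
  have this2 := compT_mem f (idM A) i
  rw [show ((idM A).1 : Fin k → M.Tm k) = M.idTuple A from rfl, key,
    Part.mem_some_iff] at this2
  rw [this2]
  exact congrArg f.1 (Fin.ext (by show k - (k - 1 - (i:ℕ)) - 1 = (i:ℕ); have := i.isLt; omega))

lemma assoc' {w x y z : ℕ} {W : M.Ctx w} {X : M.Ctx x} {Y : M.Ctx y} {Z : M.Ctx z}
    (f : Mor M w x W X) (g : Mor M x y X Y) (h : Mor M y z Y Z) :
    compT ⟨compT f g, comp_hom f g⟩ h = compT f ⟨compT g h, comp_hom g h⟩ := by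
  funext i
  have key := M.ax_subst_subst_tm w x y W X f.1 g.1 (h.1 i)
    f.2
    (by intro j; rw [ft_ty h.2 i]; exact g.2 j)
    (compT g h i) (compT_mem g h i)
    (compT f g) (compT_mem f g)
  have m1 := compT_mem f ⟨compT g h, comp_hom g h⟩ i
  rw [show ((⟨compT g h, comp_hom g h⟩ : Mor M x z X Z).1) = compT g h from rfl, key] at m1
  exact Part.mem_unique (compT_mem ⟨compT f g, comp_hom f g⟩ h i) m1
end SubProof

namespace SubProof
variable {M : SubModel.{u}}

lemma pb_dom {n k : ℕ} (A : M.Ctx (n + 1)) (B : M.Ctx k) (f : Mor M k n B (M.ft n A)) :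
    (M.substTy k n B A f.1).Dom := by
  rw [M.ax_def_substTy]
  exact f.2

/-- The pullback object `f*(A) = A[f]`. -/
def pbC {n k : ℕ} (A : M.Ctx (n + 1)) (B : M.Ctx k) (f : Mor M k n B (M.ft n A)) :
    M.Ctx (k + 1) :=
  (M.substTy k n B A f.1).get (pb_dom A B f)

lemma pbC_mem {n k : ℕ} (A : M.Ctx (n + 1)) (B : M.Ctx k) (f : Mor M k n B (M.ft n A)) :
    pbC A B f ∈ M.substTy k n B A f.1 :=
  Part.get_mem _

lemma pbC_ft {n k : ℕ} (A : M.Ctx (n + 1)) (B : M.Ctx k) (f : Mor M k n B (M.ft n A)) :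
    M.ft k (pbC A B f) = B :=
  M.ax_type_substTy _ _ _ _ _ _ (pbC_mem A B f)

/-- `p` as a Hom into an arbitrary context equal to `ft`. -/
lemma p_hom' {k : ℕ} (T : M.Ctx (k + 1)) (B : M.Ctx k) (hB : M.ft k T = B) :
    M.Hom (k + 1) k T B (M.pTuple T) := by
  subst hB; exact p_hom T

lemma weaken_dom {k : ℕ} (T : M.Ctx (k + 1)) (b : M.Tm k)
    (hb : M.ft k (M.ty k b) = M.ft k T) :
    (M.substTm (k + 1) k T b (M.pTuple T)).Dom := by
  rw [M.ax_def_substTm, hb]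
  exact p_hom T

/-- The connecting map `q(f, A)`. -/
def qT {n k : ℕ} (A : M.Ctx (n + 1)) (B : M.Ctx k) (f : Mor M k n B (M.ft n A)) :
    Fin (n + 1) → M.Tm (k + 1) :=
  fun i =>
    if h : (i : ℕ) < n then
      (M.substTm (k + 1) k (pbC A B f) (f.1 ⟨i, h⟩) (M.pTuple (pbC A B f))).get
        (weaken_dom _ _ ((ft_ty f.2 _).trans (pbC_ft A B f).symm))
    else M.v (k + 1) 0 (by omega) (pbC A B f)

lemma qT_mem_lt {n k : ℕ} (A : M.Ctx (n + 1)) (B : M.Ctx k) (f : Mor M k n B (M.ft n A))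
    (i : Fin (n + 1)) (h : (i : ℕ) < n) :
    qT A B f i ∈ M.substTm (k + 1) k (pbC A B f) (f.1 ⟨i, h⟩) (M.pTuple (pbC A B f)) := by
  unfold qT
  rw [dif_pos h]
  exact Part.get_mem _

lemma qT_last {n k : ℕ} (A : M.Ctx (n + 1)) (B : M.Ctx k) (f : Mor M k n B (M.ft n A))
    (i : Fin (n + 1)) (h : ¬ (i : ℕ) < n) :
    qT A B f i = M.v (k + 1) 0 (by omega) (pbC A B f) := by
  unfold qT
  rw [dif_neg h]

lemma q_hom {n k : ℕ} (A : M.Ctx (n + 1)) (B : M.Ctx k) (f : Mor M k n B (M.ft n A)) :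
    M.Hom (k + 1) (n + 1) (pbC A B f) A (qT A B f) := by
  rintro ⟨iv, hlt⟩
  by_cases h : iv < n
  · -- weakened components
    have h1 : M.ty (k + 1) (qT A B f ⟨iv, hlt⟩)
        ∈ M.substTy (k + 1) k (pbC A B f) (M.ty k (f.1 ⟨iv, h⟩)) (M.pTuple (pbC A B f)) := by
      rw [← M.ax_type_substTm]
      exact Part.mem_map _ (qT_mem_lt A B f ⟨iv, hlt⟩ h)
    have h2 := M.ax_subst_subst_ty (k + 1) k iv (pbC A B f) B (M.pTuple (pbC A B f))
      (fun j => f.1 (Fin.castLE (le_of_lt h) j))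
      (ftLe' M.ft (Nat.succ_le_of_lt hlt) A)
      (p_hom' _ _ (pbC_ft A B f))
      (by
        intro j
        rw [ft_ftLe' M.ft _ (by omega : iv ≤ n + 1) A,
          ftLe'_step M.ft (le_of_lt h) _ A]
        exact hom_restrict f.2 iv (le_of_lt h) j)
      (M.ty k (f.1 ⟨iv, h⟩))
      (by
        have := f.2 ⟨iv, h⟩
        rw [ftLe'_step M.ft (Nat.succ_le_of_lt h) (Nat.succ_le_of_lt hlt) A]
        exact this)
      (fun j => qT A B f (Fin.castLE (le_of_lt hlt) j))
      (fun j => qT_mem_lt A B f (Fin.castLE (le_of_lt hlt) j)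
        (lt_of_lt_of_le j.isLt (le_of_lt h)))
    rw [h2] at h1
    exact h1
  · -- the top variable
    have hn : iv = n := by omega
    subst hn
    rw [qT_last A B f ⟨iv, hlt⟩ h]
    have h0 := M.ax_type_var (k + 1) 0 (by omega) (pbC A B f)
    rw [ftLe'_self] at h0
    have h1 : M.ty (k + 1) (M.v (k + 1) 0 (by omega) (pbC A B f)) ∈
        M.substTy (k + 1) k (pbC A B f) (pbC A B f) (M.pTuple (pbC A B f)) := h0
    have h2 := M.ax_subst_subst_ty (k + 1) k iv (pbC A B f) B (M.pTuple (pbC A B f))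
      f.1 A
      (p_hom' _ _ (pbC_ft A B f))
      f.2
      (pbC A B f) (pbC_mem A B f)
      (fun j => qT A B f (Fin.castLE (le_of_lt hlt) j))
      (fun j => qT_mem_lt A B f (Fin.castLE (le_of_lt hlt) j) j.isLt)
    rw [ftLe'_self]
    rw [h2] at h1
    exact h1

/-- `q` as a `Mor`. -/
def qM {n k : ℕ} (A : M.Ctx (n + 1)) (B : M.Ctx k) (f : Mor M k n B (M.ft n A)) :
    Mor M (k + 1) (n + 1) (pbC A B f) A :=
  ⟨qT A B f, q_hom A B f⟩

end SubProof

namespace SubProof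
variable {M : SubModel.{u}}

lemma cast_val_cod {n k : ℕ} {X : M.Ctx n} {B B' : M.Ctx k} (e : B = B')
    (pf : Mor M n k X B = Mor M n k X B') (g : Mor M n k X B) :
    (cast pf g).1 = g.1 := by
  subst e
  rw [show cast pf g = g from cast_eq_iff_heq.mpr HEq.rfl]

lemma cast_val_dom {n k : ℕ} {X X' : M.Ctx n} {B : M.Ctx k} (e : X = X')
    (pf : Mor M n k X B = Mor M n k X' B) (g : Mor M n k X B) :
    (cast pf g).1 = g.1 := by
  subst e
  rw [show cast pf g = g from cast_eq_iff_heq.mpr HEq.rfl]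

lemma morHEq {n k : ℕ} {T T' : M.Ctx n} {A : M.Ctx k} (e : T = T')
    {a b : Fin k → M.Tm n} (hab : a = b) (ha : M.Hom n k T A a) (hb : M.Hom n k T' A b) :
    HEq (⟨a, ha⟩ : Mor M n k T A) (⟨b, hb⟩ : Mor M n k T' A) := by
  subst e; subst hab; rfl

/-- p as a Mor, with codomain an arbitrary context equal to `ft`. -/
def pM' {k : ℕ} (T : M.Ctx (k + 1)) (B : M.Ctx k) (hB : M.ft k T = B) :
    Mor M (k + 1) k T B :=
  ⟨M.pTuple T, p_hom' T B hB⟩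

lemma square_comp {n k : ℕ} (A : M.Ctx (n + 1)) (B : M.Ctx k)
    (f : Mor M k n B (M.ft n A)) :
    compT (qM A B f) (pM' A (M.ft n A) rfl) =
      compT (pM' (pbC A B f) B (pbC_ft A B f)) f := by
  funext i
  have key := M.ax_var_subst (k + 1) (n + 1) (pbC A B f) A (qT A B f)
    (q_hom A B f) (n - i) (by omega)
  have m1 : compT (qM A B f) (pM' A (M.ft n A) rfl) i ∈
      M.substTm (k + 1) (n + 1) (pbC A B f) (M.v (n + 1) (n - i) (by omega) A)
        (qT A B f) := compT_mem (qM A B f) (pM' A (M.ft n A) rfl) i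
  rw [key, Part.mem_some_iff] at m1
  rw [m1, show (⟨n + 1 - (n - (i : ℕ)) - 1, by omega⟩ : Fin (n + 1))
    = ⟨(i : ℕ), by omega⟩ from Fin.ext (by show n + 1 - (n - (i : ℕ)) - 1 = (i : ℕ); have := i.isLt; omega)]
  exact Part.mem_unique (qT_mem_lt A B f ⟨(i : ℕ), by omega⟩ i.isLt)
    (compT_mem (pM' (pbC A B f) B (pbC_ft A B f)) f i)
end SubProof

namespace SubProof
variable {M : SubModel.{u}}

section Cartesian
variable {n k x : ℕ} (A : M.Ctx (n + 1)) (B : M.Ctx k) (f : Mor M k n B (M.ft n A))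
  {Xc : M.Ctx x} (g : Mor M x (n + 1) Xc A) (h : Mor M x k Xc B)

lemma cart_key (hyp : compT g (pM' A (M.ft n A) rfl) = compT h f) (j : Fin n) :
    g.1 ⟨(j : ℕ), by omega⟩ ∈ M.substTm x k Xc (f.1 j) h.1 := by
  have e1 := congrFun hyp j
  have m1 : compT g (pM' A (M.ft n A) rfl) j ∈
      M.substTm x (n + 1) Xc (M.v (n + 1) (n - j) (by omega) A) g.1 :=
    compT_mem g (pM' A (M.ft n A) rfl) j
  rw [M.ax_var_subst x (n + 1) Xc A g.1 g.2 (n - j) (by omega),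
    Part.mem_some_iff] at m1
  rw [show (⟨(j : ℕ), by omega⟩ : Fin (n + 1)) = ⟨n + 1 - (n - (j : ℕ)) - 1, by omega⟩
    from Fin.ext (by show (j : ℕ) = n + 1 - (n - (j : ℕ)) - 1; have := j.isLt; omega),
    ← m1, e1]
  exact compT_mem h f j

end Cartesian

/-- The universal map into the pullback. -/
def uT {n k x : ℕ} {A : M.Ctx (n + 1)} {B : M.Ctx k} {Xc : M.Ctx x}
    (g : Mor M x (n + 1) Xc A) (h : Mor M x k Xc B) : Fin (k + 1) → M.Tm x :=
  fun j => if hj : (j : ℕ) < k then h.1 ⟨(j : ℕ), hj⟩ else g.1 (Fin.last n)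

lemma uT_lt {n k x : ℕ} {A : M.Ctx (n + 1)} {B : M.Ctx k} {Xc : M.Ctx x}
    (g : Mor M x (n + 1) Xc A) (h : Mor M x k Xc B)
    (j : Fin (k + 1)) (hj : (j : ℕ) < k) : uT g h j = h.1 ⟨(j : ℕ), hj⟩ := by
  unfold uT; rw [dif_pos hj]

lemma uT_ge {n k x : ℕ} {A : M.Ctx (n + 1)} {B : M.Ctx k} {Xc : M.Ctx x}
    (g : Mor M x (n + 1) Xc A) (h : Mor M x k Xc B)
    (j : Fin (k + 1)) (hj : ¬ (j : ℕ) < k) : uT g h j = g.1 (Fin.last n) := by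
  unfold uT; rw [dif_neg hj]

lemma uT_restrict {n k x : ℕ} {A : M.Ctx (n + 1)} {B : M.Ctx k} {Xc : M.Ctx x}
    (g : Mor M x (n + 1) Xc A) (h : Mor M x k Xc B) :
    (fun j : Fin k => uT g h (Fin.castLE (by omega : k ≤ k + 1) j)) = h.1 := by
  funext j
  rw [uT_lt g h _ j.isLt]
  exact congrArg h.1 (Fin.ext rfl)

section Cartesian
variable {n k x : ℕ} (A : M.Ctx (n + 1)) (B : M.Ctx k) (f : Mor M k n B (M.ft n A))
  {Xc : M.Ctx x} (g : Mor M x (n + 1) Xc A) (h : Mor M x k Xc B)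

lemma u_hom (hyp : compT g (pM' A (M.ft n A) rfl) = compT h f) :
    M.Hom x (k + 1) Xc (pbC A B f) (uT g h) := by
  rintro ⟨iv, hlt⟩
  by_cases hi : iv < k
  · rw [ftLe'_step M.ft (Nat.succ_le_of_lt hi) (Nat.succ_le_of_lt hlt) (pbC A B f),
      pbC_ft A B f]
    have et : (fun j : Fin iv => uT g h (Fin.castLE (le_of_lt hlt) j))
        = (fun j : Fin iv => h.1 (Fin.castLE (le_of_lt hi) j)) := by
      funext j
      rw [uT_lt g h _ (lt_of_lt_of_le j.isLt (le_of_lt hi))]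
      exact congrArg h.1 (Fin.ext rfl)
    rw [show uT g h ⟨iv, hlt⟩ = h.1 ⟨iv, hi⟩ from uT_lt g h _ hi, et]
    exact h.2 ⟨iv, hi⟩
  · have hk : iv = k := by omega
    subst hk
    rw [ftLe'_self]
    have et : (fun j : Fin iv => uT g h (Fin.castLE (le_of_lt hlt) j)) = h.1 := by
      funext j
      rw [uT_lt g h _ j.isLt]
      exact congrArg h.1 (Fin.ext rfl)
    rw [show uT g h ⟨iv, hlt⟩ = g.1 (Fin.last n) from uT_ge g h _ hi, et]
    have hg := g.2 (Fin.last n)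
    rw [ftLe'_self] at hg
    have h2 := M.ax_subst_subst_ty x iv n Xc B h.1 f.1 A h.2 f.2
      (pbC A B f) (pbC_mem A B f)
      (fun j => g.1 ⟨(j : ℕ), by omega⟩) (cart_key A B f g h hyp)
    rw [h2]
    exact hg

end Cartesian
end SubProof

namespace SubProof
variable {M : SubModel.{u}}

lemma var_subst_mem {m k : ℕ} {Z : M.Ctx m} {T : M.Ctx (k + 1)}
    (u : Mor M m (k + 1) Z T) (j : Fin (k + 1)) :
    u.1 j ∈ M.substTm m (k + 1) Z (M.v (k + 1) (k - j) (by omega) T) u.1 := by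
  rw [M.ax_var_subst m (k + 1) Z T u.1 u.2 (k - j) (by omega), Part.mem_some_iff]
  exact congrArg u.1 (Fin.ext
    (by show (j : ℕ) = k + 1 - (k - (j : ℕ)) - 1; have := j.isLt; omega))

section Cartesian
variable {n k x : ℕ} (A : M.Ctx (n + 1)) (B : M.Ctx k) (f : Mor M k n B (M.ft n A))
  {Xc : M.Ctx x} (g : Mor M x (n + 1) Xc A) (h : Mor M x k Xc B)

lemma comp_u_p (hu : M.Hom x (k + 1) Xc (pbC A B f) (uT g h)) :
    compT ⟨uT g h, hu⟩ (pM' (pbC A B f) B (pbC_ft A B f)) = h.1 := by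
  funext j
  have m1 : compT ⟨uT g h, hu⟩ (pM' (pbC A B f) B (pbC_ft A B f)) j ∈
      M.substTm x (k + 1) Xc (M.v (k + 1) (k - j) (by omega) (pbC A B f)) (uT g h) :=
    compT_mem ⟨uT g h, hu⟩ (pM' (pbC A B f) B (pbC_ft A B f)) j
  have m2 := var_subst_mem (⟨uT g h, hu⟩ : Mor M x (k + 1) Xc (pbC A B f))
    (Fin.castLE (by omega : k ≤ k + 1) j)
  rw [Part.mem_unique m1 m2]
  exact (uT_lt g h _ j.isLt).trans (congrArg h.1 (Fin.ext rfl))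

lemma comp_u_q (hyp : compT g (pM' A (M.ft n A) rfl) = compT h f)
    (hu : M.Hom x (k + 1) Xc (pbC A B f) (uT g h)) :
    compT ⟨uT g h, hu⟩ (qM A B f) = g.1 := by
  funext i
  obtain ⟨iv, hlt⟩ := i
  have m1 : compT ⟨uT g h, hu⟩ (qM A B f) ⟨iv, hlt⟩ ∈
      M.substTm x (k + 1) Xc (qT A B f ⟨iv, hlt⟩) (uT g h) :=
    compT_mem ⟨uT g h, hu⟩ (qM A B f) ⟨iv, hlt⟩
  by_cases hi : iv < n
  · have key1 := M.ax_subst_subst_tm x (k + 1) k Xc (pbC A B f) (uT g h)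
      (M.pTuple (pbC A B f)) (f.1 ⟨iv, hi⟩)
      hu
      (by
        intro j
        rw [ft_ty f.2 ⟨iv, hi⟩]
        exact p_hom' (pbC A B f) B (pbC_ft A B f) j)
      (qT A B f ⟨iv, hlt⟩) (qT_mem_lt A B f ⟨iv, hlt⟩ hi)
      (fun j => uT g h (Fin.castLE (by omega : k ≤ k + 1) j))
      (fun j => var_subst_mem (⟨uT g h, hu⟩ : Mor M x (k + 1) Xc (pbC A B f))
        (Fin.castLE (by omega : k ≤ k + 1) j))
    rw [key1, uT_restrict g h] at m1
    exact Part.mem_unique m1 (cart_key A B f g h hyp ⟨iv, hi⟩)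
  · have hn : iv = n := by omega
    subst hn
    rw [qT_last A B f ⟨iv, hlt⟩ hi] at m1
    have m2 : uT g h (Fin.last k) ∈
        M.substTm x (k + 1) Xc (M.v (k + 1) 0 (by omega) (pbC A B f)) (uT g h) := by
      rw [M.ax_var_subst x (k + 1) Xc (pbC A B f) (uT g h) hu 0 (by omega)]
      exact Part.mem_some _
    rw [Part.mem_unique m1 m2, uT_ge g h _ (by simp)]
    exact congrArg g.1 (Fin.ext rfl)

lemma u_unique (u' : Mor M x (k + 1) Xc (pbC A B f))
    (e1 : compT u' (qM A B f) = g.1)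
    (e2 : compT u' (pM' (pbC A B f) B (pbC_ft A B f)) = h.1) :
    u'.1 = uT g h := by
  funext j
  by_cases hj : (j : ℕ) < k
  · have m1 : compT u' (pM' (pbC A B f) B (pbC_ft A B f)) ⟨(j : ℕ), hj⟩ ∈
        M.substTm x (k + 1) Xc (M.v (k + 1) (k - j) (by omega) (pbC A B f)) u'.1 :=
      compT_mem u' (pM' (pbC A B f) B (pbC_ft A B f)) ⟨(j : ℕ), hj⟩
    have m2 := var_subst_mem u' j
    have e3 := Part.mem_unique m2 m1
    rw [congrFun e2 ⟨(j : ℕ), hj⟩] at e3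
    rw [uT_lt g h j hj]
    exact e3
  · have m1 : compT u' (qM A B f) (Fin.last n) ∈
        M.substTm x (k + 1) Xc (qT A B f (Fin.last n)) u'.1 :=
      compT_mem u' (qM A B f) (Fin.last n)
    rw [qT_last A B f (Fin.last n) (by simp)] at m1
    have m2 : u'.1 (Fin.last k) ∈
        M.substTm x (k + 1) Xc (M.v (k + 1) 0 (by omega) (pbC A B f)) u'.1 := by
      rw [M.ax_var_subst x (k + 1) Xc (pbC A B f) u'.1 u'.2 0 (by omega)]
      exact Part.mem_some _
    have e3 := Part.mem_unique m2 m1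
    rw [congrFun e1 (Fin.last n)] at e3
    rw [uT_ge g h _ hj,
      show j = Fin.last k from Fin.ext (by simp only [Fin.val_last]; have := j.isLt; omega),
      e3]

end Cartesian
end SubProof

namespace SubProof
variable {M : SubModel.{u}}

lemma v_congr {n i i' : ℕ} (e : i = i') (h : i < n) (h' : i' < n) (A : M.Ctx n) :
    M.v n i h A = M.v n i' h' A := by subst e; rfl

lemma pb_id' {n : ℕ} (A : M.Ctx (n + 1)) :
    pbC A (M.ft n A) (idM (M.ft n A)) = A := by
  have key := M.ax_subst_var_ty n A
  have m1 : A ∈ M.substTy n n (M.ft n A) A (idM (M.ft n A)).1 := by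
    rw [show ((idM (M.ft n A)).1 : Fin n → M.Tm n)
      = (fun j : Fin n => M.v n (n - 1 - j) (by omega) (M.ft n A)) from rfl, key]
    exact Part.mem_some _
  exact Part.get_eq_of_mem m1 _

lemma q_id' {n : ℕ} (A : M.Ctx (n + 1)) :
    qT A (M.ft n A) (idM (M.ft n A)) = M.idTuple A := by
  have e := pb_id' A
  funext i
  obtain ⟨iv, hlt⟩ := i
  by_cases hi : iv < n
  · have key := M.ax_var_subst (n + 1) n (pbC A (M.ft n A) (idM (M.ft n A)))
      (M.ft n A) (M.pTuple (pbC A (M.ft n A) (idM (M.ft n A))))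
      (p_hom' _ _ (by rw [e])) (n - 1 - iv) (by omega)
    have m1 : qT A (M.ft n A) (idM (M.ft n A)) ⟨iv, hlt⟩ ∈
        M.substTm (n + 1) n (pbC A (M.ft n A) (idM (M.ft n A)))
          (M.v n (n - 1 - iv) (by omega) (M.ft n A))
          (M.pTuple (pbC A (M.ft n A) (idM (M.ft n A)))) :=
      qT_mem_lt A (M.ft n A) (idM (M.ft n A)) ⟨iv, hlt⟩ hi
    rw [key, Part.mem_some_iff] at m1
    rw [m1, show (⟨n - (n - 1 - iv) - 1, by omega⟩ : Fin n) = ⟨iv, hi⟩ from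
      Fin.ext (by show n - (n - 1 - iv) - 1 = iv; omega)]
    show M.v (n + 1) (n - iv) _ (pbC A (M.ft n A) (idM (M.ft n A))) = _
    rw [e]
    exact v_congr rfl _ _ A
  · have hn : iv = n := by omega
    subst hn
    rw [qT_last A (M.ft iv A) (idM (M.ft iv A)) ⟨iv, hlt⟩ hi, e]
    show M.v (iv + 1) 0 _ A = M.v (iv + 1) (iv + 1 - 1 - iv) _ A
    exact v_congr (by omega) _ _ A

section Comp
variable {n k m : ℕ} (A : M.Ctx (n + 1)) (B : M.Ctx k) (f : Mor M k n B (M.ft n A))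
  (C : M.Ctx m) (g : Mor M m k C B) (hg' : M.Hom m k C (M.ft k (pbC A B f)) g.1)

lemma pb_comp' :
    pbC A C ⟨compT g f, comp_hom g f⟩ = pbC (pbC A B f) C ⟨g.1, hg'⟩ := by
  have key := M.ax_subst_subst_ty m k n C B g.1 f.1 A g.2 f.2
    (pbC A B f) (pbC_mem A B f) (compT g f) (compT_mem g f)
  have h2 : pbC (pbC A B f) C ⟨g.1, hg'⟩ ∈ M.substTy m k C (pbC A B f) g.1 :=
    pbC_mem (pbC A B f) C ⟨g.1, hg'⟩
  rw [key] at h2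
  exact Part.mem_unique (pbC_mem A C ⟨compT g f, comp_hom g f⟩) h2

lemma q_comp' :
    qT A C ⟨compT g f, comp_hom g f⟩ =
      compT (qM (pbC A B f) C ⟨g.1, hg'⟩) (qM A B f) := by
  have e := pb_comp' A B f C g hg'
  funext i
  obtain ⟨iv, hlt⟩ := i
  by_cases hi : iv < n
  · -- weakened components
    have m1 : qT A C ⟨compT g f, comp_hom g f⟩ ⟨iv, hlt⟩ ∈
        M.substTm (m + 1) m (pbC A C ⟨compT g f, comp_hom g f⟩)
          (compT g f ⟨iv, hi⟩) (M.pTuple (pbC A C ⟨compT g f, comp_hom g f⟩)) :=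
      qT_mem_lt A C ⟨compT g f, comp_hom g f⟩ ⟨iv, hlt⟩ hi
    rw [e] at m1
    have m2 : compT (qM (pbC A B f) C ⟨g.1, hg'⟩) (qM A B f) ⟨iv, hlt⟩ ∈
        M.substTm (m + 1) (k + 1) (pbC (pbC A B f) C ⟨g.1, hg'⟩)
          (qT A B f ⟨iv, hlt⟩) (qT (pbC A B f) C ⟨g.1, hg'⟩) :=
      compT_mem (qM (pbC A B f) C ⟨g.1, hg'⟩) (qM A B f) ⟨iv, hlt⟩
    have key1 := M.ax_subst_subst_tm (m + 1) (k + 1) k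
      (pbC (pbC A B f) C ⟨g.1, hg'⟩) (pbC A B f)
      (qT (pbC A B f) C ⟨g.1, hg'⟩) (M.pTuple (pbC A B f)) (f.1 ⟨iv, hi⟩)
      (q_hom (pbC A B f) C ⟨g.1, hg'⟩)
      (by
        intro j
        rw [ft_ty f.2 ⟨iv, hi⟩]
        exact p_hom' (pbC A B f) B (pbC_ft A B f) j)
      (qT A B f ⟨iv, hlt⟩) (qT_mem_lt A B f ⟨iv, hlt⟩ hi)
      (fun j => qT (pbC A B f) C ⟨g.1, hg'⟩ (Fin.castLE (by omega : k ≤ k + 1) j))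
      (fun j => var_subst_mem (qM (pbC A B f) C ⟨g.1, hg'⟩)
        (Fin.castLE (by omega : k ≤ k + 1) j))
    have key2 := M.ax_subst_subst_tm (m + 1) m k
      (pbC (pbC A B f) C ⟨g.1, hg'⟩) C
      (M.pTuple (pbC (pbC A B f) C ⟨g.1, hg'⟩)) g.1 (f.1 ⟨iv, hi⟩)
      (p_hom' _ _ (pbC_ft (pbC A B f) C ⟨g.1, hg'⟩))
      (by
        intro j
        rw [ft_ty f.2 ⟨iv, hi⟩]
        exact g.2 j)
      (compT g f ⟨iv, hi⟩) (compT_mem g f ⟨iv, hi⟩)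
      (fun j => qT (pbC A B f) C ⟨g.1, hg'⟩ (Fin.castLE (by omega : k ≤ k + 1) j))
      (fun j => qT_mem_lt (pbC A B f) C ⟨g.1, hg'⟩
        (Fin.castLE (by omega : k ≤ k + 1) j) j.isLt)
    rw [key2] at m1
    rw [key1] at m2
    exact Part.mem_unique m1 m2
  · have hn : iv = n := by omega
    subst hn
    rw [qT_last A C ⟨compT g f, comp_hom g f⟩ ⟨iv, hlt⟩ hi, e]
    have m2 : compT (qM (pbC A B f) C ⟨g.1, hg'⟩) (qM A B f) ⟨iv, hlt⟩ ∈
        M.substTm (m + 1) (k + 1) (pbC (pbC A B f) C ⟨g.1, hg'⟩)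
          (M.v (k + 1) 0 (by omega) (pbC A B f)) (qT (pbC A B f) C ⟨g.1, hg'⟩) := by
      have := compT_mem (qM (pbC A B f) C ⟨g.1, hg'⟩) (qM A B f) ⟨iv, hlt⟩
      rw [show (qM A B f).1 ⟨iv, hlt⟩ = M.v (k + 1) 0 (by omega) (pbC A B f) from
        qT_last A B f ⟨iv, hlt⟩ hi] at this
      exact this
    rw [M.ax_var_subst (m + 1) (k + 1) (pbC (pbC A B f) C ⟨g.1, hg'⟩) (pbC A B f)
      (qT (pbC A B f) C ⟨g.1, hg'⟩) (q_hom (pbC A B f) C ⟨g.1, hg'⟩) 0 (by omega),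
      Part.mem_some_iff] at m2
    rw [m2]
    exact (qT_last (pbC A B f) C ⟨g.1, hg'⟩ ⟨k + 1 - 0 - 1, by omega⟩ (by show ¬ k + 1 - 0 - 1 < k; omega)).symm

end Comp
end SubProof

namespace SubProof
variable {M : SubModel.{u}}

lemma square_glue {n k : ℕ} (A : M.Ctx (n + 1)) (B : M.Ctx k) (f : Mor M k n B (M.ft n A))
    (P : Mor M (k + 1) k (pbC A B f) (M.ft k (pbC A B f)))
    (hP : P = pM' (pbC A B f) (M.ft k (pbC A B f)) rfl)
    (pf : Mor M (k + 1) k (pbC A B f) (M.ft k (pbC A B f))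
      = Mor M (k + 1) k (pbC A B f) B) :
    (⟨compT (qM A B f) (pM' A (M.ft n A) rfl),
        comp_hom (qM A B f) (pM' A (M.ft n A) rfl)⟩ : Mor M (k + 1) n (pbC A B f) (M.ft n A))
      = ⟨compT (cast pf P) f, comp_hom (cast pf P) f⟩ := by
  subst hP
  rw [show cast pf (pM' (pbC A B f) (M.ft k (pbC A B f)) rfl)
      = pM' (pbC A B f) B (pbC_ft A B f) from
    Subtype.ext (cast_val_cod (pbC_ft A B f) pf _)]
  exact Subtype.ext (square_comp A B f)

lemma cartesian_glue {n k x : ℕ} (A : M.Ctx (n + 1)) (B : M.Ctx k)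
    (f : Mor M k n B (M.ft n A)) {Xc : M.Ctx x}
    (g : Mor M x (n + 1) Xc A) (h : Mor M x k Xc B)
    (P : Mor M (k + 1) k (pbC A B f) (M.ft k (pbC A B f)))
    (hP : P = pM' (pbC A B f) (M.ft k (pbC A B f)) rfl)
    (pf : Mor M (k + 1) k (pbC A B f) (M.ft k (pbC A B f))
      = Mor M (k + 1) k (pbC A B f) B)
    (hyp : (⟨compT g (pM' A (M.ft n A) rfl), comp_hom g (pM' A (M.ft n A) rfl)⟩ :
        Mor M x n Xc (M.ft n A)) = ⟨compT h f, comp_hom h f⟩) :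
    ∃! u : Mor M x (k + 1) Xc (pbC A B f),
      (⟨compT u (qM A B f), comp_hom u (qM A B f)⟩ : Mor M x (n + 1) Xc A) = g ∧
      (⟨compT u (cast pf P), comp_hom u (cast pf P)⟩ : Mor M x k Xc B) = h := by
  subst hP
  rw [show cast pf (pM' (pbC A B f) (M.ft k (pbC A B f)) rfl)
      = pM' (pbC A B f) B (pbC_ft A B f) from
    Subtype.ext (cast_val_cod (pbC_ft A B f) pf _)]
  have hyp' : compT g (pM' A (M.ft n A) rfl) = compT h f := congrArg Subtype.val hyp
  have hu := u_hom A B f g h hyp'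
  refine ⟨⟨uT g h, hu⟩, ⟨?_, ?_⟩, ?_⟩
  · exact Subtype.ext ((comp_u_q A B f g h hyp' hu).trans rfl)
  · exact Subtype.ext ((comp_u_p A B f g h hu).trans rfl)
  · rintro u' ⟨e1, e2⟩
    exact Subtype.ext (u_unique A B f g h u'
      (congrArg Subtype.val e1) (congrArg Subtype.val e2))

lemma pb_comp_glue {n k m : ℕ} (A : M.Ctx (n + 1)) (B : M.Ctx k)
    (f : Mor M k n B (M.ft n A)) (C : M.Ctx m) (g : Mor M m k C B)
    (pf : Mor M m k C B = Mor M m k C (M.ft k (pbC A B f))) :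
    pbC A C ⟨compT g f, comp_hom g f⟩ = pbC (pbC A B f) C (cast pf g) := by
  have hg' : M.Hom m k C (M.ft k (pbC A B f)) g.1 := by
    rw [pbC_ft A B f]; exact g.2
  rw [show cast pf g = (⟨g.1, hg'⟩ : Mor M m k C (M.ft k (pbC A B f))) from
    Subtype.ext (cast_val_cod (pbC_ft A B f).symm pf g)]
  exact pb_comp' A B f C g hg'

lemma q_comp_glue {n k m : ℕ} (A : M.Ctx (n + 1)) (B : M.Ctx k)
    (f : Mor M k n B (M.ft n A)) (C : M.Ctx m) (g : Mor M m k C B)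
    (pf : Mor M m k C B = Mor M m k C (M.ft k (pbC A B f))) :
    HEq (qM A C ⟨compT g f, comp_hom g f⟩)
      (⟨compT (qM (pbC A B f) C (cast pf g)) (qM A B f),
        comp_hom (qM (pbC A B f) C (cast pf g)) (qM A B f)⟩ :
        Mor M (m + 1) (n + 1) (pbC (pbC A B f) C (cast pf g)) A) := by
  have hg' : M.Hom m k C (M.ft k (pbC A B f)) g.1 := by
    rw [pbC_ft A B f]; exact g.2
  rw [show cast pf g = (⟨g.1, hg'⟩ : Mor M m k C (M.ft k (pbC A B f))) from
    Subtype.ext (cast_val_cod (pbC_ft A B f).symm pf g)]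
  exact morHEq (pb_comp' A B f C g hg') (q_comp' A B f C g hg') _ _

/-- The contextual category associated to a model of `𝕊`. -/
def F (M : SubModel.{u}) : CtxCat.{u} where
  Ob := M.Ctx
  Hom X Y := Mor M X.1 Y.1 X.2 Y.2
  id X := idM X.2
  comp f g := ⟨compT f g, comp_hom f g⟩
  id_comp f := Subtype.ext (id_comp' f)
  comp_id f := Subtype.ext (comp_id' f)
  assoc f g h := Subtype.ext (assoc' f g h)
  pt := M.star
  pt_unique := M.ctx_zero_unique
  toPt X := ⟨fun i => i.elim0, fun i => i.elim0⟩
  toPt_unique X f := Subtype.ext (funext fun i => i.elim0)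
  ft {n} A := M.ft n A
  p {n} A := pM' A (M.ft n A) rfl
  pb {n k} A B f := pbC A B f
  pb_ft {n k} A B f := pbC_ft A B f
  q {n k} A B f := qM A B f
  square {n k} A B f := square_glue A B f _ rfl _
  cartesian {n k} A B f X g h hyp := cartesian_glue A B f g h _ rfl _ hyp
  pb_id {n} A := pb_id' A
  q_id {n} A := morHEq (pb_id' A) (q_id' A) _ _
  pb_comp {n k m} A B f C g := pb_comp_glue A B f C g _
  q_comp {n k m} A B f C g := q_comp_glue A B f C g _

end SubProof

namespace SubProof
variable {M : SubModel.{u}}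

lemma q_unique {n k : ℕ} (A : M.Ctx (k + 1)) (B : M.Ctx n) (fm : Mor M n k B (M.ft k A))
    (qf : Fin (k + 1) → M.Tm (n + 1))
    (hcast : ∀ i : Fin k, qf i.castSucc ∈
      M.substTm (n + 1) n (pbC A B fm) (fm.1 i) (M.pTuple (pbC A B fm)))
    (hlast : qf (Fin.last k) = M.v (n + 1) 0 (by omega) (pbC A B fm)) :
    qf = qT A B fm := by
  funext i
  obtain ⟨iv, hlt⟩ := i
  by_cases hi : iv < k
  · exact Part.mem_unique (hcast ⟨iv, hi⟩) (qT_mem_lt A B fm ⟨iv, hlt⟩ hi)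
  · have h2 : (⟨iv, hlt⟩ : Fin (k + 1)) = Fin.last k :=
      Fin.ext (by simp only [Fin.val_last]; omega)
    rw [h2, hlast, qT_last A B fm (Fin.last k) (by simp)]

lemma q_compat_glue {n k : ℕ} (A : M.Ctx (k + 1)) (B : M.Ctx n) (a : Fin k → M.Tm n)
    (y : Mor M n k B (M.ft k A)) (hy : y.1 = a)
    {T : M.Ctx (n + 1)} (hT : T ∈ M.substTy n k B A a)
    (qf : Fin (k + 1) → M.Tm (n + 1)) (hq : M.Hom (n + 1) (k + 1) T A qf)
    (hcast : ∀ i : Fin k, qf i.castSucc ∈ M.substTm (n + 1) n T (a i) (M.pTuple T))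
    (hlast : qf (Fin.last k) = M.v (n + 1) 0 (by omega) T)
    (pf2 : Mor M (n + 1) (k + 1) (pbC A B y) A = Mor M (n + 1) (k + 1) T A) :
    (⟨qf, hq⟩ : Mor M (n + 1) (k + 1) T A) = cast pf2 (qM A B y) := by
  subst hy
  have eT : pbC A B y = T := Part.get_eq_of_mem hT _
  rw [← eT] at hcast hlast
  refine eq_cast_iff_heq.mpr ?_
  exact morHEq eT.symm (q_unique A B y qf hcast hlast) hq (q_hom A B y)

end SubProof


open SubProof

/-- For any model `M` of the theory of substitutions `𝕊`, the data `F(M)`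
— objects of level `n` the contexts of length `n`, morphisms the compatible tuples of terms,
composition by substitution, identities the tuples of variables, `ft` and projections as
given, pullbacks `A[f]` by substitution and connecting maps `q(f, A)` — forms a contextual
category (so in particular the canonical square with vertices `A[f], A, B, ft_k(A)` is
Cartesian, this being part of the structure of a contextual category). -/
theorem submodel_forms_contextual_category (M : SubModel.{u}) :
    ∃ C : CtxCat.{u}, Nonempty (SubCtxCorrespondence M C) := by
  refine ⟨F M, ⟨?_⟩⟩
  refine
    { obEquiv := fun n => Equiv.refl _
      ft_compat := fun n A => rfl
      homEquiv := fun n k B A => Equiv.refl _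
      id_compat := fun n A h => Subtype.ext rfl
      comp_compat := ?_
      p_compat := ?_
      pb_compat := ?_
      q_compat := ?_ }
  · intro n k m B A A' f g h hmem
    exact Subtype.ext (funext fun i => Part.mem_unique (compT_mem f g i) (hmem i))
  · intro n A h
    exact eq_cast_iff_heq.mpr (heq_of_eq (Subtype.ext rfl))
  · intro n k B A a h T hT
    have h1 : ∀ (pf : Mor M n k B (M.ft k A) = Mor M n k B (M.ft k A))
        (x : Mor M n k B (M.ft k A)), cast pf x = x :=
      fun pf x => cast_eq_iff_heq.mpr HEq.rfl
    show T = pbC A B ⟨a, h⟩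
    exact (Part.get_eq_of_mem hT _).symm
  · intro n k B A a h T hT qf hq hcast hlast
    exact q_compat_glue A B a _ (by exact cast_val_cod rfl _ _) hT qf hq hcast hlast _
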